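/- arXiv:2007.14532 — 4 statements merged into one kernel-verified Lean document; each statement's English description precedes it below -/
import Mathlib

section
/- Let E, F and W be finite-dimensional real inner product spaces, and let m, ℓ, ℓ′ be positive integers. For each multi-index β ∈ ℕ^m with |β| = ℓ let B_β : E → F be linear with symbol L(ξ) := ∑_{|β|=ℓ} ξ^β B_β, and for each multi-index β′ ∈ ℕ^m with |β′| = ℓ′ let M_{β′} : F → W be linear with symbol M(ξ) := ∑_{|β′|=ℓ′} ξ^{β′} M_{β′}. If ⋂_{ξ ∈ ℝ^m} ker L(ξ) = {0} and there exists ξ₀ ∈ ℝ^m such that M(ξ₀) is injective, then ⋂_{ξ ∈ ℝ^m} ker (M(ξ) ∘ L(ξ)) = {0}. -/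
open Finset

/-- The symbol `L(ξ) = ∑_{|β|=ℓ} ξ^β B_β` of a family of linear maps indexed by
multi-indices `β ∈ ℕ^m` with `|β| = ℓ`. -/
noncomputable def symbolOf {E F : Type*} [NormedAddCommGroup E] [InnerProductSpace ℝ E]
    [NormedAddCommGroup F] [InnerProductSpace ℝ F]
    (m ℓ : ℕ) (B : (Fin m → ℕ) → E →ₗ[ℝ] F) (ξ : Fin m → ℝ) : E →ₗ[ℝ] F :=
  ∑ β ∈ Finset.Nat.antidiagonalTuple m ℓ, (∏ i, ξ i ^ β i) • B β

/-- Post-composition with a symbol that is injective at one point preserves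
cocancellation. -/
theorem stmt2 {E F W : Type*} [NormedAddCommGroup E] [InnerProductSpace ℝ E]
    [FiniteDimensional ℝ E] [NormedAddCommGroup F] [InnerProductSpace ℝ F]
    [FiniteDimensional ℝ F] [NormedAddCommGroup W] [InnerProductSpace ℝ W]
    [FiniteDimensional ℝ W]
    (m ℓ ℓ' : ℕ) (hm : 0 < m) (hℓ : 0 < ℓ) (hℓ' : 0 < ℓ')
    (B : (Fin m → ℕ) → E →ₗ[ℝ] F) (M : (Fin m → ℕ) → F →ₗ[ℝ] W)
    (hL : (⨅ ξ : Fin m → ℝ, LinearMap.ker (symbolOf m ℓ B ξ)) = ⊥)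
    (hM : ∃ ξ₀ : Fin m → ℝ, Function.Injective ⇑(symbolOf m ℓ' M ξ₀)) :
    (⨅ ξ : Fin m → ℝ,
      LinearMap.ker ((symbolOf m ℓ' M ξ).comp (symbolOf m ℓ B ξ))) = ⊥ := by
  obtain ⟨ξ₀, hξ₀⟩ := hM
  rw [eq_bot_iff]
  intro x hx
  simp only [Submodule.mem_iInf, LinearMap.mem_ker, LinearMap.comp_apply] at hx
  set N : (Fin m → ℝ) → (F →L[ℝ] W) := fun ξ =>
    ∑ β ∈ Finset.Nat.antidiagonalTuple m ℓ',
      (∏ i, ξ i ^ β i) • (LinearMap.toContinuousLinearMap (M β)) with hN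
  have hNcoe : ∀ ξ, ⇑(N ξ) = ⇑(symbolOf m ℓ' M ξ) := by
    intro ξ
    funext y
    simp [hN, symbolOf, ContinuousLinearMap.sum_apply, LinearMap.sum_apply]
  have hNcont : Continuous N := by
    apply continuous_finset_sum
    intro β _
    exact Continuous.smul (by fun_prop : Continuous fun ξ : Fin m → ℝ => ∏ i, ξ i ^ β i) continuous_const
  have hopen : IsOpen {ξ : Fin m → ℝ | Function.Injective ⇑(N ξ)} :=
    ContinuousLinearMap.isOpen_injective.preimage hNcont
  have hmem : ξ₀ ∈ {ξ : Fin m → ℝ | Function.Injective ⇑(N ξ)} := by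
    simp only [Set.mem_setOf_eq, hNcoe]
    exact hξ₀
  have hf : AnalyticOnNhd ℝ (fun ξ => symbolOf m ℓ B ξ x) Set.univ := by
    have heq : (fun ξ : Fin m → ℝ => symbolOf m ℓ B ξ x)
        = fun ξ => ∑ β ∈ Finset.Nat.antidiagonalTuple m ℓ, (∏ i, ξ i ^ β i) • (B β x) := by
      funext ξ
      simp [symbolOf]
    rw [heq]
    apply Finset.analyticOnNhd_fun_sum
    intro β _
    refine AnalyticOnNhd.smul ?_ analyticOnNhd_const
    apply Finset.analyticOnNhd_fun_prod
    intro i _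
    exact ((ContinuousLinearMap.proj i : (Fin m → ℝ) →L[ℝ] ℝ).analyticOnNhd _).pow _
  have hzero : (fun ξ => symbolOf m ℓ B ξ x) =ᶠ[nhds ξ₀] 0 := by
    filter_upwards [hopen.mem_nhds hmem] with ξ hξ
    have hinj : Function.Injective ⇑(symbolOf m ℓ' M ξ) := by
      rw [← hNcoe]; exact hξ
    have : symbolOf m ℓ' M ξ (symbolOf m ℓ B ξ x) = symbolOf m ℓ' M ξ 0 := by
      simp [hx ξ]
    exact hinj this
  have hall : ∀ ξ, symbolOf m ℓ B ξ x = 0 := fun ξ =>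
    hf.eqOn_zero_of_preconnected_of_eventuallyEq_zero isPreconnected_univ
      (Set.mem_univ ξ₀) hzero (Set.mem_univ ξ)
  have hx0 : x ∈ ⨅ ξ : Fin m → ℝ, LinearMap.ker (symbolOf m ℓ B ξ) :=
    Submodule.mem_iInf _ |>.mpr fun ξ => hall ξ
  rw [hL] at hx0
  exact hx0
end

section
/- Let m and ℓ be positive integers and let U be a nonempty open subset of ℝ^m. Then there exist vectors v_1, …, v_{m+ℓ−1} ∈ ℝ^m with the following properties: (i) any m distinct vectors among v_1, …, v_{m+ℓ−1} are linearly independent; (ii) for every ℓ-element subset S of {1, …, m+ℓ−1} there exists ξ_S ∈ U that is orthogonal to v_i for every i ∉ S; and (iii) the polynomials p_S(ξ) := ∏_{i ∈ S} ⟨v_i, ξ⟩, where S ranges over the ℓ-element subsets of {1, …, m+ℓ−1}, form a basis of the real vector space of homogeneous polynomials of degree ℓ in the variables ξ_1, …, ξ_m. -/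
open Finset
open scoped RealInnerProductSpace

open MvPolynomial in
theorem aux_homog_finrank (m ℓ : ℕ) :
    FiniteDimensional ℝ (homogeneousSubmodule (Fin m) ℝ ℓ) ∧
    Module.finrank ℝ (homogeneousSubmodule (Fin m) ℝ ℓ) = (m + ℓ - 1).choose ℓ := by
  classical
  set s : Set (Fin m →₀ ℕ) := {d | d.degree = ℓ} with hs
  have hdeg : ∀ mu : Multiset (Fin m), (Multiset.toFinsupp mu).degree = Multiset.card mu := by
    intro mu
    rw [← Multiset.toFinsupp_sum_eq mu]
    rfl
  have E : Sym (Fin m) ℓ ≃ ↥s :=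
    { toFun := fun x => ⟨Multiset.toFinsupp x.1, by
        simp only [hs, Set.mem_setOf_eq, hdeg, x.2]⟩
      invFun := fun d => ⟨Finsupp.toMultiset d.1, by
        have := d.2
        simp only [hs, Set.mem_setOf_eq] at this
        rw [← this, ← hdeg (Finsupp.toMultiset d.1), Finsupp.toMultiset_toFinsupp]⟩
      left_inv := fun x => Subtype.ext (Multiset.toFinsupp_toMultiset x.1)
      right_inv := fun d => Subtype.ext (Finsupp.toMultiset_toFinsupp d.1) }
  letI : Fintype ↥s := Fintype.ofEquiv _ E
  have hcards : Fintype.card ↥s = (m + ℓ - 1).choose ℓ := by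
    rw [← Fintype.card_congr E, Sym.card_sym_eq_multichoose, Nat.multichoose_eq,
      Fintype.card_fin]
  have e1 : homogeneousSubmodule (Fin m) ℝ ℓ = AddMonoidAlgebra.supported ℝ ℝ s :=
    homogeneousSubmodule_eq_finsupp_supported (Fin m) ℝ ℓ
  let e2 : (homogeneousSubmodule (Fin m) ℝ ℓ) ≃ₗ[ℝ] (↥s →₀ ℝ) :=
    (LinearEquiv.ofEq _ _ e1).trans (AddMonoidAlgebra.supportedEquivFinsupp s)
  let e3 : (homogeneousSubmodule (Fin m) ℝ ℓ) ≃ₗ[ℝ] (↥s → ℝ) :=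
    e2.trans (Finsupp.linearEquivFunOnFinite ℝ ℝ ↥s)
  constructor
  · exact Module.Finite.equiv e3.symm
  · rw [e3.finrank_eq, Module.finrank_fintype_fun_eq_card, hcards]

/-- Given a nonempty open set `U ⊆ ℝ^m`, one can choose `m + ℓ - 1` vectors in
general position such that: any `m` of them are linearly independent; for any
`ℓ`-element subset `S` of the index set there is a point of `U` orthogonal to
all vectors whose index is not in `S`; and the products `∏_{i ∈ S} ⟨v_i, ξ⟩`
form a basis of the homogeneous polynomials of degree `ℓ` in `m` variables. -/
theorem stmt4 (m ℓ : ℕ) (hm : 0 < m) (hℓ : 0 < ℓ)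
    (U : Set (EuclideanSpace ℝ (Fin m))) (hU : U.Nonempty) (hUopen : IsOpen U) :
    ∃ v : Fin (m + ℓ - 1) → EuclideanSpace ℝ (Fin m),
      (∀ s : Finset (Fin (m + ℓ - 1)), s.card = m →
        LinearIndependent ℝ (fun i : s => v i.1)) ∧
      (∀ S : Finset (Fin (m + ℓ - 1)), S.card = ℓ →
        ∃ ξ ∈ U, ∀ i ∉ S, ⟪v i, ξ⟫ = 0) ∧
      (LinearIndependent ℝ
          (fun S : {S : Finset (Fin (m + ℓ - 1)) // S.card = ℓ} =>
            ∏ i ∈ S.1, ∑ j, MvPolynomial.C (v i j) * MvPolynomial.X j) ∧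
        Submodule.span ℝ
            (Set.range (fun S : {S : Finset (Fin (m + ℓ - 1)) // S.card = ℓ} =>
              ∏ i ∈ S.1, ∑ j, MvPolynomial.C (v i j) * MvPolynomial.X j)) =
          MvPolynomial.homogeneousSubmodule (Fin m) ℝ ℓ) := by
  classical
  haveI : Nontrivial (EuclideanSpace ℝ (Fin m)) :=
    ⟨⟨EuclideanSpace.single ⟨0, hm⟩ 1, 0, by
      intro h
      have := congrFun (congrArg WithLp.ofLp h) ⟨0, hm⟩
      simp at this⟩⟩
  obtain ⟨ξ₀, hξ₀U, hξ₀⟩ : ∃ ξ₀ ∈ U, ξ₀ ≠ (0 : EuclideanSpace ℝ (Fin m)) := by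
    obtain ⟨x, hx1, hx2⟩ :=
      (dense_compl_singleton (0 : EuclideanSpace ℝ (Fin m))).inter_open_nonempty U hUopen hU
    exact ⟨x, hx1, hx2⟩
  obtain ⟨ε, hε, hball⟩ := Metric.isOpen_iff.mp hUopen ξ₀ hξ₀U
  have hnorm : ‖ξ₀‖ ≠ 0 := norm_ne_zero_iff.mpr hξ₀
  -- the reflection sending `‖ξ₀‖ • e_{m-1}` to `ξ₀`
  set p : Fin m := ⟨m - 1, by omega⟩ with hpdef
  set v₀ : EuclideanSpace ℝ (Fin m) := EuclideanSpace.single p ‖ξ₀‖ with hv₀def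
  have hv₀ : ‖v₀‖ = ‖ξ₀‖ := by
    rw [hv₀def, EuclideanSpace.norm_single, norm_norm]
  set Q := Submodule.reflection (ℝ ∙ (v₀ - ξ₀))ᗮ with hQdef
  have hQv₀ : Q v₀ = ξ₀ := Submodule.reflection_sub hv₀
  set T : (Fin m → ℝ) ≃L[ℝ] EuclideanSpace ℝ (Fin m) :=
    (EuclideanSpace.equiv (Fin m) ℝ).symm with hTdef
  have hTsingle : ∀ r : ℝ, T (Pi.single p r) = EuclideanSpace.single p r := fun r => rfl
  have hQT : ∀ x y : Fin m → ℝ, ⟪Q (T x), Q (T y)⟫ = ∑ k, x k * y k := by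
    intro x y
    rw [LinearIsometryEquiv.inner_map_map]
    simp [PiLp.inner_apply, hTdef, mul_comm]
  -- the coefficient functions
  set c : ℝ → Finset (Fin (m + ℓ - 1)) → (Fin m → ℝ) :=
    fun (t : ℝ) (T' : Finset (Fin (m + ℓ - 1))) (k : Fin m) =>
      (-1 : ℝ) ^ (m - 1 - (k : ℕ)) *
        ∑ A ∈ T'.powersetCard (m - 1 - (k : ℕ)), ∏ i ∈ A, (t * ((i : ℕ) : ℝ)) with hc
  -- `c` gives the coefficients of `∏ (X - t j)`
  have hdot : ∀ (t : ℝ) (T' : Finset (Fin (m + ℓ - 1))), T'.card = m - 1 → ∀ x : ℝ,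
      ∑ k : Fin m, x ^ (k : ℕ) * c t T' k = ∏ j ∈ T', (x - t * ((j : ℕ) : ℝ)) := by
    intro t T' hT' x
    set P : Polynomial ℝ := ∏ j ∈ T', (Polynomial.X - Polynomial.C (t * ((j : ℕ) : ℝ))) with hP
    have hcv : Multiset.card T'.val = m - 1 := hT'
    have hcoeff : ∀ k : Fin m, P.coeff (k : ℕ) = c t T' k := by
      intro k
      have hk : (k : ℕ) ≤ Multiset.card (T'.val.map fun j : Fin (m + ℓ - 1) =>
          t * ((j : ℕ) : ℝ)) := by
        rw [Multiset.card_map, hcv]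
        have := k.2
        omega
      have h1 : P = ((T'.val.map fun j : Fin (m + ℓ - 1) => t * ((j : ℕ) : ℝ)).map
          fun r => Polynomial.X - Polynomial.C r).prod := by
        rw [hP, Finset.prod, Multiset.map_map]
        rfl
      rw [h1, Multiset.prod_X_sub_C_coeff _ hk, Finset.esymm_map_val]
      rw [Multiset.card_map, hcv]
    have hdeg : P.natDegree < m := by
      have h2 : P.natDegree ≤ ∑ j ∈ T',
          (Polynomial.X - Polynomial.C (t * ((j : ℕ) : ℝ))).natDegree :=
        Polynomial.natDegree_prod_le _ _
      simp only [Polynomial.natDegree_X_sub_C, Finset.sum_const, smul_eq_mul, mul_one, hT'] at h2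
      omega
    calc ∑ k : Fin m, x ^ (k : ℕ) * c t T' k
        = ∑ k : Fin m, P.coeff (k : ℕ) * x ^ (k : ℕ) := by
          refine Finset.sum_congr rfl fun k _ => ?_
          rw [hcoeff k, mul_comm]
      _ = ∑ i ∈ Finset.range m, P.coeff i * x ^ i :=
          Fin.sum_univ_eq_sum_range (fun i => P.coeff i * x ^ i) m
      _ = P.eval x := (Polynomial.eval_eq_sum_range' hdeg x).symm
      _ = ∏ j ∈ T', (x - t * ((j : ℕ) : ℝ)) := by simp [hP, Polynomial.eval_prod]
  -- value at `t = 0`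
  have hc0 : ∀ T', c 0 T' = Pi.single p (1 : ℝ) := by
    intro T'
    funext k
    rcases eq_or_ne k p with rfl | hk
    · simp only [hc, hpdef, Nat.sub_self, pow_zero, one_mul, Finset.powersetCard_zero,
        Pi.single_eq_same]
      simp
    · have hkp : (k : ℕ) < m - 1 := by
        have h1 := k.2
        have h2 : (k : ℕ) ≠ m - 1 := fun h => hk (Fin.ext (by rw [h, hpdef]))
        omega
      rw [Pi.single_eq_of_ne hk]
      have hz0 : ∀ A ∈ T'.powersetCard (m - 1 - (k : ℕ)),
          ∏ i ∈ A, ((0 : ℝ) * ((i : ℕ) : ℝ)) = 0 := by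
        intro A hA
        rw [Finset.mem_powersetCard] at hA
        obtain ⟨i, hi⟩ : A.Nonempty := by
          rw [← Finset.card_pos, hA.2]; omega
        exact Finset.prod_eq_zero hi (by ring)
      have hz : (∑ A ∈ T'.powersetCard (m - 1 - (k : ℕ)),
          ∏ i ∈ A, ((0 : ℝ) * ((i : ℕ) : ℝ))) = 0 := Finset.sum_eq_zero hz0
      simp only [hc, hz, mul_zero]
  -- continuity and the choice of `t`
  set F : {S : Finset (Fin (m + ℓ - 1)) // S.card = ℓ} → ℝ → EuclideanSpace ℝ (Fin m) :=
    fun S t => Q (T (‖ξ₀‖ • c t (S.1)ᶜ)) with hF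
  have hFcont : ∀ S, Continuous (F S) := by
    intro S
    refine Q.continuous.comp (T.continuous.comp ?_)
    refine Continuous.const_smul (g := fun t => c t (S.1)ᶜ) ?_ ‖ξ₀‖
    refine continuous_pi fun k => ?_
    exact continuous_const.mul (continuous_finset_sum _ fun A _ =>
      continuous_finset_prod _ fun i _ => (continuous_id.mul continuous_const))
  have hF0 : ∀ S, F S 0 = ξ₀ := by
    intro S
    have hsm : ‖ξ₀‖ • (Pi.single p (1 : ℝ) : Fin m → ℝ) = (Pi.single p ‖ξ₀‖ : Fin m → ℝ) := by
      funext k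
      rcases eq_or_ne k p with rfl | hk
      · simp
      · simp [Pi.single_eq_of_ne hk]
    rw [hF]
    simp only [hc0]
    rw [hsm, hTsingle ‖ξ₀‖, ← hv₀def]
    exact hQv₀
  obtain ⟨t, ht0, htb⟩ : ∃ t : ℝ, t ≠ 0 ∧ ∀ S, F S t ∈ Metric.ball ξ₀ ε := by
    have h1 : ∀ᶠ t in nhds (0 : ℝ), ∀ S, F S t ∈ Metric.ball ξ₀ ε := by
      rw [Filter.eventually_all]
      intro S
      exact (hFcont S).continuousAt.eventually_mem
        (by rw [hF0]; exact Metric.ball_mem_nhds _ hε)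
    have h2 : ∀ᶠ t in nhdsWithin (0 : ℝ) {(0 : ℝ)}ᶜ,
        t ≠ 0 ∧ ∀ S, F S t ∈ Metric.ball ξ₀ ε :=
      (eventually_mem_nhdsWithin.mono fun t ht => ht).and (h1.filter_mono nhdsWithin_le_nhds)
    exact h2.exists
  -- the vectors
  set w : Fin (m + ℓ - 1) → Fin m → ℝ :=
    fun (i : Fin (m + ℓ - 1)) (k : Fin m) => (t * ((i : ℕ) : ℝ)) ^ (k : ℕ) with hw
  set v : Fin (m + ℓ - 1) → EuclideanSpace ℝ (Fin m) := fun i => Q (T (w i)) with hv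
  have hainj : Function.Injective (fun i : Fin (m + ℓ - 1) => t * ((i : ℕ) : ℝ)) := by
    intro i1 i2 h
    simp only at h
    exact Fin.ext (Nat.cast_injective (mul_left_cancel₀ ht0 h))
  -- complement cardinality
  have hcompl : ∀ S : Finset (Fin (m + ℓ - 1)), S.card = ℓ → (Sᶜ).card = m - 1 := by
    intro S hS
    rw [Finset.card_compl, hS, Fintype.card_fin]
    omega
  -- the key inner product formula
  have hkey : ∀ (S : Finset (Fin (m + ℓ - 1))) (hS : S.card = ℓ) (i : Fin (m + ℓ - 1)),
      ⟪v i, Q (T (‖ξ₀‖ • c t Sᶜ))⟫ =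
        ‖ξ₀‖ * ∏ j ∈ Sᶜ, (t * ((i : ℕ) : ℝ) - t * ((j : ℕ) : ℝ)) := by
    intro S hS i
    rw [hv]
    simp only
    rw [hQT]
    have : ∀ k : Fin m, w i k * (‖ξ₀‖ • c t Sᶜ) k =
        ‖ξ₀‖ * ((t * ((i : ℕ) : ℝ)) ^ (k : ℕ) * c t Sᶜ k) := by
      intro k
      simp [hw, Pi.smul_apply, smul_eq_mul]
      ring
    rw [Finset.sum_congr rfl fun k _ => this k, ← Finset.mul_sum,
      hdot t Sᶜ (hcompl S hS) (t * ((i : ℕ) : ℝ))]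
  refine ⟨v, ?_, ?_, ?_, ?_⟩
  · -- linear independence of any m of the vectors
    intro s hs
    have e : Fin m ≃ ↥s := (finCongr hs.symm).trans s.equivFin.symm
    have hinj : Function.Injective
        (fun k : Fin m => t * (((e k : Fin (m + ℓ - 1)) : ℕ) : ℝ)) := by
      intro k1 k2 h
      exact e.injective (Subtype.ext (hainj h))
    have hLI : LinearIndependent ℝ (fun k : Fin m => w (e k : Fin (m + ℓ - 1))) := by
      have h4 : IsUnit (Matrix.vandermonde fun k : Fin m =>
          t * (((e k : Fin (m + ℓ - 1)) : ℕ) : ℝ)) :=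
        (Matrix.isUnit_iff_isUnit_det _).mpr
          (isUnit_iff_ne_zero.2 (Matrix.det_vandermonde_ne_zero_iff.mpr hinj))
      have h5 := Matrix.linearIndependent_rows_iff_isUnit.mpr h4
      exact h5
    have hLI2 : LinearIndependent ℝ (fun i : s => w i.1) :=
      (linearIndependent_equiv e).mp hLI
    exact hLI2.map' (T.toLinearEquiv.trans Q.toLinearEquiv).toLinearMap
      (T.toLinearEquiv.trans Q.toLinearEquiv).ker
  · -- the point of U orthogonal to the complementary vectors
    intro S hS
    refine ⟨F ⟨S, hS⟩ t, hball (htb ⟨S, hS⟩), fun i hi => ?_⟩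
    rw [hF]
    simp only
    rw [hkey S hS i]
    refine mul_eq_zero_of_right _ ?_
    exact Finset.prod_eq_zero (Finset.mem_compl.mpr hi) (sub_self _)
  -- data for the polynomial part
  all_goals {
    have horth : ∀ (S : {S : Finset (Fin (m + ℓ - 1)) // S.card = ℓ}) (i : Fin (m + ℓ - 1)),
        i ∉ S.1 → ⟪v i, F S t⟫ = 0 := by
      intro S i hi
      rw [hF]
      simp only
      rw [hkey S.1 S.2 i]
      exact mul_eq_zero_of_right _
        (Finset.prod_eq_zero (Finset.mem_compl.mpr hi) (sub_self _))
    have hnz : ∀ (S : {S : Finset (Fin (m + ℓ - 1)) // S.card = ℓ}) (i : Fin (m + ℓ - 1)),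
        i ∈ S.1 → ⟪v i, F S t⟫ ≠ 0 := by
      intro S i hi
      rw [hF]
      simp only
      rw [hkey S.1 S.2 i]
      refine mul_ne_zero hnorm (Finset.prod_ne_zero_iff.mpr fun j hj => ?_)
      refine sub_ne_zero.mpr fun h => ?_
      exact (Finset.mem_compl.mp hj) (by rwa [hainj h] at hi)
    have heval : ∀ (S : Finset (Fin (m + ℓ - 1))) (ξ' : EuclideanSpace ℝ (Fin m)),
        MvPolynomial.eval (fun j => ξ' j)
            (∏ i ∈ S, ∑ j, MvPolynomial.C (v i j) * MvPolynomial.X j)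
          = ∏ i ∈ S, ⟪v i, ξ'⟫ := by
      intro S ξ'
      rw [map_prod]
      refine Finset.prod_congr rfl fun i _ => ?_
      rw [map_sum]
      simp [PiLp.inner_apply, conj_trivial, mul_comm]
    have hLIpoly : LinearIndependent ℝ
        (fun S : {S : Finset (Fin (m + ℓ - 1)) // S.card = ℓ} =>
          ∏ i ∈ S.1, ∑ j, MvPolynomial.C (v i j) * MvPolynomial.X j) := by
      rw [Fintype.linearIndependent_iff]
      intro g hg S'
      have h1 := congrArg (MvPolynomial.eval (fun j => F S' t j)) hg
      rw [map_sum, map_zero] at h1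
      simp only [MvPolynomial.smul_eval, heval] at h1
      rw [Fintype.sum_eq_single S' (fun S hS => ?_)] at h1
      · have hne : (∏ i ∈ S'.1, ⟪v i, F S' t⟫) ≠ 0 :=
          Finset.prod_ne_zero_iff.mpr fun i hi => hnz S' i hi
        exact (mul_eq_zero.mp h1).resolve_right hne
      · have hne : S.1 ≠ S'.1 := fun h => hS (Subtype.ext h)
        have hns : ¬ S.1 ⊆ S'.1 := fun h =>
          hne (Finset.eq_of_subset_of_card_le h (by rw [S.2, S'.2]))
        obtain ⟨i, hiS, hiS'⟩ := Finset.not_subset.mp hns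
        rw [Finset.prod_eq_zero hiS (horth S' i hiS'), mul_zero]
    first
    | exact hLIpoly
    | {
      -- the span is the homogeneous submodule
      haveI := (aux_homog_finrank m ℓ).1
      have hmem : ∀ S : {S : Finset (Fin (m + ℓ - 1)) // S.card = ℓ},
          (∏ i ∈ S.1, ∑ j, MvPolynomial.C (v i j) * MvPolynomial.X j) ∈
            MvPolynomial.homogeneousSubmodule (Fin m) ℝ ℓ := by
        intro S
        rw [MvPolynomial.mem_homogeneousSubmodule]
        have h1 : ∀ i ∈ S.1, (∑ j, MvPolynomial.C (v i j) * MvPolynomial.X j :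
            MvPolynomial (Fin m) ℝ).IsHomogeneous 1 := by
          intro i _
          refine MvPolynomial.IsHomogeneous.sum _ _ _ fun j _ => ?_
          have := (MvPolynomial.isHomogeneous_C (Fin m) (v i j)).mul
            (MvPolynomial.isHomogeneous_X ℝ j)
          rwa [zero_add] at this
        have h2 := MvPolynomial.IsHomogeneous.prod S.1 _ (fun _ => 1) h1
        rwa [Finset.sum_const, smul_eq_mul, mul_one, S.2] at h2
      refine Submodule.eq_of_le_of_finrank_le (Submodule.span_le.mpr ?_) ?_
      · rintro x ⟨S, rfl⟩
        exact hmem S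
      · rw [finrank_span_eq_card hLIpoly, (aux_homog_finrank m ℓ).2]
        have h3 : Fintype.card {S : Finset (Fin (m + ℓ - 1)) // S.card = ℓ} =
            (m + ℓ - 1).choose ℓ := by
          rw [Fintype.card_finset_len, Fintype.card_fin]
        rw [h3]
    }
  }
end

section
/- Let n ≥ 2 be an integer. There is a constant C = C(n) such that for all smooth compactly supported functions u_1, …, u_n : ℝⁿ → ℝ, ∑_{j=1}^{n} ‖u_j‖_{L^{n/(n−1)}(ℝⁿ)} ≤ C ∑_{i=1}^{n} ∑_{j=1}^{n} ‖∂_i u_j + ∂_j u_i‖_{L¹(ℝⁿ)}. -/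
open MeasureTheory

theorem Real.ennnorm_eq_ofReal_abs (r : ℝ) : (‖r‖₊ : ENNReal) = ENNReal.ofReal |r| := by
  rw [← enorm_eq_nnnorm, Real.enorm_eq_ofReal_abs]

open Finset in
theorem line_ftc {n : ℕ} (w : (Fin n → ℝ) → ℝ) (hw : ContDiff ℝ (⊤:ℕ∞) w)
    (h2w : HasCompactSupport w) (d : Fin n → ℝ) (hd : d ≠ 0) (x : Fin n → ℝ) :
    (‖w x‖₊ : ENNReal) ≤ ∫⁻ t : ℝ, ‖fderiv ℝ w (x + t • d) d‖₊ := by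
  set g : ℝ → ℝ := fun t => w (x + t • d) with hg
  have hwd : Differentiable ℝ w := hw.differentiable (by simp)
  have hline : ∀ t, HasDerivAt (fun t : ℝ => x + t • d) d t := by
    intro t
    simpa using ((hasDerivAt_id t).smul_const d).const_add x
  have hg' : ∀ t, HasDerivAt g (fderiv ℝ w (x + t • d) d) t := fun t =>
    (hwd (x + t • d)).hasFDerivAt.comp_hasDerivAt t (hline t)
  have hgc : ContDiff ℝ 1 g := by
    have h1 : ContDiff ℝ (⊤:ℕ∞) (fun t : ℝ => x + t • d) :=
      ContDiff.add contDiff_const (ContDiff.smul contDiff_id contDiff_const)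
    exact (hw.comp h1).of_le (by exact_mod_cast le_top)
  have hdn : 0 < ‖d‖ := norm_pos_iff.mpr hd
  -- compact support of g
  have hgsupp : HasCompactSupport g := by
    obtain ⟨R, hR⟩ := (h2w.isBounded.subset_closedBall 0)
    apply HasCompactSupport.intro (K := Metric.closedBall (0:ℝ) ((R + ‖x‖) / ‖d‖))
      (isCompact_closedBall _ _)
    intro t ht
    by_contra h
    have hmem : x + t • d ∈ tsupport w := subset_tsupport w (by simpa [hg] using h)
    have hRle : ‖x + t • d‖ ≤ R := by
      have := hR hmem; simpa [Metric.mem_closedBall, dist_zero_right] using this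
    have h1 : ‖t • d‖ - ‖x‖ ≤ R := by
      have h2 : ‖t • d‖ ≤ ‖x + t • d‖ + ‖x‖ := by
        calc ‖t • d‖ = ‖(x + t • d) - x‖ := by ring_nf
          _ ≤ ‖x + t • d‖ + ‖x‖ := norm_sub_le _ _
      linarith
    have h3 : |t| * ‖d‖ ≤ R + ‖x‖ := by
      rw [norm_smul, Real.norm_eq_abs] at h1; linarith
    have h4 : |t| ≤ (R + ‖x‖) / ‖d‖ := (le_div_iff₀ hdn).mpr h3
    simp only [Metric.mem_closedBall, dist_zero_right, Real.norm_eq_abs] at ht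
    exact ht h4
  -- FTC
  have key : w x = ∫ t in Set.Iic (0:ℝ), deriv g t := by
    have := HasCompactSupport.integral_Iic_deriv_eq hgc hgsupp 0
    simp only [hg] at this ⊢
    rw [this]; simp
  rw [key]
  calc (‖∫ t in Set.Iic (0:ℝ), deriv g t‖₊ : ENNReal)
      ≤ ∫⁻ t in Set.Iic (0:ℝ), ‖deriv g t‖₊ := enorm_integral_le_lintegral_enorm _
    _ ≤ ∫⁻ t : ℝ, ‖deriv g t‖₊ := setLIntegral_le_lintegral _ _
    _ = ∫⁻ t : ℝ, ‖fderiv ℝ w (x + t • d) d‖₊ := by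
        apply lintegral_congr; intro t
        rw [(hg' t).deriv]

open Finset in
theorem shear_mp {n : ℕ} (j : Fin n) (S : Finset (Fin n)) (hj : j ∉ S) :
    MeasurePreserving (fun y : Fin n → ℝ =>
        y + (∑ i ∈ S, y i) • (Pi.single j 1 : Fin n → ℝ))
      volume volume := by
  classical
  set T : (Fin n → ℝ) →ₗ[ℝ] (Fin n → ℝ) :=
    LinearMap.id + (∑ i ∈ S, LinearMap.proj (R := ℝ) (φ := fun _ : Fin n => ℝ) i).smulRight
      ((Pi.single j 1 : Fin n → ℝ)) with hT
  have hTapp : ∀ y, T y = y + (∑ i ∈ S, y i) • (Pi.single j 1 : Fin n → ℝ) := by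
    intro y; simp [hT]
  have hdet : LinearMap.det T = 1 := by
    have hM : LinearMap.toMatrix' T =
        1 + Matrix.replicateCol Unit (Pi.single j 1 : Fin n → ℝ) *
          Matrix.replicateRow Unit (fun i => if i ∈ S then (1:ℝ) else 0) := by
      ext k l
      simp [hT, LinearMap.toMatrix'_apply, Matrix.one_apply, Pi.single_apply,
        Matrix.add_apply, Matrix.mul_apply, Finset.sum_ite_eq']
      split <;> simp [Pi.single_apply]
    rw [← LinearMap.det_toMatrix', hM, Matrix.det_one_add_replicateCol_mul_replicateRow]
    simp [dotProduct, Pi.single_apply, Finset.sum_ite_eq', hj]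
  have hmeas : Measurable T := T.continuous_of_finiteDimensional.measurable
  refine ⟨by simpa [funext hTapp] using hmeas, ?_⟩
  have := Real.map_linearMap_volume_pi_eq_smul_volume_pi (f := T) (by rw [hdet]; norm_num)
  rw [hdet] at this
  have h2 : ⇑T = fun y : Fin n → ℝ => y + (∑ i ∈ S, y i) • (Pi.single j 1 : Fin n → ℝ) :=
    funext hTapp
  rw [← h2]
  simpa using this

open Finset in
theorem core {n : ℕ} (hn : 2 ≤ n) (j : Fin n) (F : (Fin n → ℝ) → ENNReal)
    (hF : Measurable F) (v : (Fin n → ℝ) → ℝ)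
    (hv1 : ∀ x, (‖v x‖₊ : ENNReal) ≤ ∫⁻ s : ℝ, F (x + s • (Pi.single j 1 : Fin n → ℝ)))
    (hv2 : ∀ i, i ≠ j → ∀ x, (‖v x‖₊ : ENNReal) ≤
      (∫⁻ s : ℝ, F (x + s • ((Pi.single i 1 : Fin n → ℝ) + Pi.single j 1))) +
      ∫⁻ s : ℝ, F (x + s • (Pi.single i 1 : Fin n → ℝ))) :
    ∫⁻ x, (‖v x‖₊ : ENNReal) ^ ((n : ℝ) / ((n : ℝ) - 1)) ≤
      2 ^ (n - 1) * (∫⁻ y, F y) ^ ((n : ℝ) / ((n : ℝ) - 1)) := by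
  classical
  have hn1 : (1 : ℝ) < n := by exact_mod_cast hn.trans_lt' one_lt_two
  have hn1' : (0:ℝ) < (n:ℝ) - 1 := by linarith
  set p : ℝ := ((n : ℝ) - 1)⁻¹ with hp
  have hp0 : 0 ≤ p := by positivity
  have hn2 : (2:ℝ) ≤ (n:ℝ) := by exact_mod_cast hn
  have hp1 : p ≤ 1 := by
    rw [hp]
    rw [inv_le_one₀ hn1']
    linarith
  have hq : (n : ℝ) / ((n : ℝ) - 1) = (n : ℕ) * p := by rw [hp]; field_simp
  -- the line-integral function
  set L : (Fin n → ℝ) → (Fin n → ℝ) → ENNReal :=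
    fun d x => ∫⁻ s : ℝ, F (x + s • d) with hL
  have hLmeas : ∀ d, Measurable (fun x => L d x) := by
    intro d
    have h : Measurable (Function.uncurry fun (x : Fin n → ℝ) (s : ℝ) => F (x + s • d)) :=
      hF.comp (measurable_fst.add (measurable_snd.smul_const d))
    exact h.lintegral_prod_right
  -- direction assignment
  set w : Finset (Fin n) → Fin n → (Fin n → ℝ) :=
    fun S i => if i ∈ S then (Pi.single i 1 : Fin n → ℝ) + Pi.single j 1
      else Pi.single i 1 with hw
  -- Step A : pointwise bound
  have stepA : ∀ x, (‖v x‖₊ : ENNReal) ^ ((n : ℝ) / ((n : ℝ) - 1)) ≤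
      ∑ S ∈ (univ.erase j).powerset, ∏ i, (L (w S i) x) ^ p := by
    intro x
    have h0 : (‖v x‖₊ : ENNReal) ^ ((n : ℝ) / ((n : ℝ) - 1)) =
        ∏ _i : Fin n, (‖v x‖₊ : ENNReal) ^ p := by
      rw [prod_const, card_univ, Fintype.card_fin, ← ENNReal.rpow_natCast _ n, hq,
        ← ENNReal.rpow_mul, mul_comm]
    rw [h0, ← Finset.mul_prod_erase univ _ (mem_univ j)]
    have h1 : (‖v x‖₊ : ENNReal) ^ p ≤ (L (Pi.single j 1) x) ^ p :=
      ENNReal.rpow_le_rpow (hv1 x) hp0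
    have h2 : ∏ i ∈ univ.erase j, (‖v x‖₊ : ENNReal) ^ p ≤
        ∏ i ∈ univ.erase j, ((L ((Pi.single i 1 : Fin n → ℝ) + Pi.single j 1) x) ^ p
          + (L (Pi.single i 1) x) ^ p) := by
      apply Finset.prod_le_prod' -- might be prod_le_prod
      intro i hi
      have hij : i ≠ j := (Finset.mem_erase.mp hi).1
      calc (‖v x‖₊ : ENNReal) ^ p
          ≤ ((L ((Pi.single i 1 : Fin n → ℝ) + Pi.single j 1) x)
            + (L (Pi.single i 1) x)) ^ p := ENNReal.rpow_le_rpow (hv2 i hij x) hp0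
        _ ≤ _ := ENNReal.rpow_add_le_add_rpow _ _ hp0 hp1
    calc (‖v x‖₊ : ENNReal) ^ p * ∏ i ∈ univ.erase j, (‖v x‖₊ : ENNReal) ^ p
        ≤ (L (Pi.single j 1) x) ^ p *
          ∏ i ∈ univ.erase j, ((L ((Pi.single i 1 : Fin n → ℝ) + Pi.single j 1) x) ^ p
            + (L (Pi.single i 1) x) ^ p) := mul_le_mul' h1 h2
      _ = ∑ S ∈ (univ.erase j).powerset, ∏ i, (L (w S i) x) ^ p := by
          rw [Finset.prod_add, Finset.mul_sum]
          apply Finset.sum_congr rfl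
          intro S hS
          have hSsub : S ⊆ univ.erase j := Finset.mem_powerset.mp hS
          have hjS : j ∉ S := fun h => (Finset.mem_erase.mp (hSsub h)).1 rfl
          rw [← Finset.mul_prod_erase univ _ (mem_univ j)]
          congr 1
          · congr 1
            simp [hw, hjS]
          · rw [← Finset.prod_sdiff hSsub, mul_comm]
            congr 1
            · apply Finset.prod_congr rfl; intro i hi
              congr 2
              simp [hw, (Finset.mem_sdiff.mp hi).2]
            · apply Finset.prod_congr rfl; intro i hi
              congr 2
              simp [hw, hi]
  -- measurability of the products
  have measL : ∀ S : Finset (Fin n), Measurable (fun x => ∏ i, (L (w S i) x) ^ p) := by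
    intro S
    exact Finset.measurable_prod _ (fun i _ => (hLmeas (w S i)).pow_const _)
  -- Step C : each summand is bounded via the grid-lines lemma
  have stepC : ∀ S ∈ (univ.erase j).powerset,
      ∫⁻ x, ∏ i, (L (w S i) x) ^ p ≤ (∫⁻ y, F y) ^ ((n : ℝ) / ((n : ℝ) - 1)) := by
    intro S hS
    have hSsub : S ⊆ univ.erase j := Finset.mem_powerset.mp hS
    have hjS : j ∉ S := fun h => (Finset.mem_erase.mp (hSsub h)).1 rfl
    set T : (Fin n → ℝ) → (Fin n → ℝ) :=
      fun y => y + (∑ i ∈ S, y i) • (Pi.single j 1 : Fin n → ℝ) with hT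
    have hTmp : MeasurePreserving T volume volume := shear_mp j S hjS
    set f : (Fin n → ℝ) → ENNReal := fun y => F (T y) with hf
    have hfmeas : Measurable f := hF.comp hTmp.measurable
    have hupd : ∀ (y : Fin n → ℝ) (i : Fin n) (s : ℝ),
        Function.update y i (y i + s) = y + s • (Pi.single i 1 : Fin n → ℝ) := by
      intro y i s
      funext k
      by_cases hk : k = i
      · subst hk; simp
      · simp [Function.update, hk, Pi.single_apply]
    have hTlin : ∀ (y : Fin n → ℝ) (i : Fin n) (s : ℝ),
        T y + s • w S i = T (Function.update y i (y i + s)) := by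
      intro y i s
      rw [hupd]
      funext k
      by_cases hiS : i ∈ S
      · simp only [hT, hw, hiS, if_pos]
        simp [Finset.sum_add_distrib, Pi.single_apply, Finset.sum_ite_eq', hiS,
          smul_add, add_smul]
        ring
      · simp only [hT, hw, hiS, if_neg, not_false_iff]
        simp [Finset.sum_add_distrib, Pi.single_apply, Finset.sum_ite_eq', hiS,
          smul_add, add_smul]
        ring
    have key : ∀ (y : Fin n → ℝ) (i : Fin n),
        L (w S i) (T y) = ∫⁻ t : ℝ, f (Function.update y i t) := by
      intro y i
      have hg : Measurable fun t : ℝ => f (Function.update y i t) :=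
        hfmeas.comp (measurable_update y)
      have h2 : ∀ s : ℝ, F (T y + s • w S i) = f (Function.update y i (y i + s)) := by
        intro s; rw [hTlin y i s]
      calc L (w S i) (T y) = ∫⁻ s : ℝ, f (Function.update y i (y i + s)) := by
            rw [hL]; exact lintegral_congr fun s => h2 s
        _ = ∫⁻ t : ℝ, f (Function.update y i t) :=
            (measurePreserving_add_left volume (y i)).lintegral_comp hg
    -- conjugate exponent
    have hconj : Real.HolderConjugate (Fintype.card (Fin n)) ((n : ℝ) / ((n : ℝ) - 1)) := by
      rw [Fintype.card_fin]
      exact Real.HolderConjugate.conjExponent hn1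
    calc ∫⁻ x, ∏ i, (L (w S i) x) ^ p
        = ∫⁻ y, ∏ i, (L (w S i) (T y)) ^ p := (hTmp.lintegral_comp (measL S)).symm
      _ = ∫⁻ y, ∏ i, (∫⁻ t : ℝ, f (Function.update y i t)) ^ p := by
          apply lintegral_congr; intro y
          exact Finset.prod_congr rfl fun i _ => by rw [key y i]
      _ ≤ (∫⁻ y, f y) ^ ((n : ℝ) / ((n : ℝ) - 1)) := by
          have := MeasureTheory.lintegral_prod_lintegral_pow_le
            (A := fun _ : Fin n => ℝ) (μ := fun _ => (volume : Measure ℝ)) hconj hfmeas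
          rw [Fintype.card_fin] at this
          simpa [volume_pi, hp, one_div] using this
      _ = (∫⁻ y, F y) ^ ((n : ℝ) / ((n : ℝ) - 1)) := by
          rw [hTmp.lintegral_comp hF]
  -- assemble
  calc ∫⁻ x, (‖v x‖₊ : ENNReal) ^ ((n : ℝ) / ((n : ℝ) - 1))
      ≤ ∫⁻ x, ∑ S ∈ (univ.erase j).powerset, ∏ i, (L (w S i) x) ^ p :=
        lintegral_mono stepA
    _ = ∑ S ∈ (univ.erase j).powerset, ∫⁻ x, ∏ i, (L (w S i) x) ^ p :=
        lintegral_finset_sum _ (fun S _ => measL S)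
    _ ≤ ∑ S ∈ (univ.erase j).powerset, (∫⁻ y, F y) ^ ((n : ℝ) / ((n : ℝ) - 1)) :=
        Finset.sum_le_sum stepC
    _ = 2 ^ (n - 1) * (∫⁻ y, F y) ^ ((n : ℝ) / ((n : ℝ) - 1)) := by
        rw [Finset.sum_const, Finset.card_powerset, Finset.card_erase_of_mem (mem_univ j),
          card_univ, Fintype.card_fin, nsmul_eq_mul]
        norm_num

open Finset in
theorem korn_pi {n : ℕ} (hn : 2 ≤ n) (v : Fin n → (Fin n → ℝ) → ℝ)
    (hv : ∀ j, ContDiff ℝ (⊤ : ℕ∞) (v j)) (hs : ∀ j, HasCompactSupport (v j)) :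
    ∑ j : Fin n, (∫ y, |v j y| ^ ((n : ℝ) / ((n : ℝ) - 1))) ^ (((n : ℝ) - 1) / (n : ℝ)) ≤
      ((n : ℝ) * 2 ^ (n - 1)) * ∑ i : Fin n, ∑ j : Fin n, ∫ y,
        |fderiv ℝ (v j) y (Pi.single i 1) + fderiv ℝ (v i) y (Pi.single j 1)| := by
  classical
  have hn1 : (1 : ℝ) < n := by exact_mod_cast hn.trans_lt' one_lt_two
  have hn0 : (0 : ℝ) < n := by linarith
  have hn1' : (0 : ℝ) < (n : ℝ) - 1 := by linarith
  set q : ℝ := (n : ℝ) / ((n : ℝ) - 1) with hqdef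
  have hq0 : 0 ≤ q := by positivity
  have hvd : ∀ j, Differentiable ℝ (v j) := fun j =>
    (hv j).differentiable (by simp)
  -- the symmetrized derivative entries
  set A : Fin n → Fin n → (Fin n → ℝ) → ℝ := fun k l y =>
    fderiv ℝ (v l) y (Pi.single k 1) + fderiv ℝ (v k) y (Pi.single l 1) with hA
  have contD : ∀ (l : Fin n) (c : Fin n → ℝ), Continuous fun y => fderiv ℝ (v l) y c := by
    intro l c
    exact ((hv l).continuous_fderiv (by simp)).clm_apply continuous_const
  have contA : ∀ k l, Continuous (A k l) := fun k l => (contD l _).add (contD k _)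
  have suppA : ∀ k l, HasCompactSupport (A k l) := by
    intro k l
    have h1 : HasCompactSupport fun y => fderiv ℝ (v l) y (Pi.single k 1) :=
      ((hs l).fderiv ℝ).comp_left (g := fun L : (Fin n → ℝ) →L[ℝ] ℝ => L (Pi.single k 1)) rfl
    have h2 : HasCompactSupport fun y => fderiv ℝ (v k) y (Pi.single l 1) :=
      ((hs k).fderiv ℝ).comp_left (g := fun L : (Fin n → ℝ) →L[ℝ] ℝ => L (Pi.single l 1)) rfl
    exact h1.add h2
  have intA : ∀ k l, Integrable (A k l) := fun k l =>
    (contA k l).integrable_of_hasCompactSupport (suppA k l)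
  set F : (Fin n → ℝ) → ENNReal := fun y => ∑ k : Fin n, ∑ l : Fin n, (‖A k l y‖₊ : ENNReal)
    with hF
  have measF : Measurable F := by
    apply Finset.measurable_sum
    intro k _
    apply Finset.measurable_sum
    intro l _
    exact (contA k l).measurable.enorm
  have termleF : ∀ k l y, (‖A k l y‖₊ : ENNReal) ≤ F y := by
    intro k l y
    calc (‖A k l y‖₊ : ENNReal) ≤ ∑ l' : Fin n, (‖A k l' y‖₊ : ENNReal) :=
          Finset.single_le_sum (f := fun l' => (‖A k l' y‖₊ : ENNReal))
            (fun _ _ => zero_le) (mem_univ l)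
      _ ≤ F y := Finset.single_le_sum
          (f := fun k' => ∑ l' : Fin n, (‖A k' l' y‖₊ : ENNReal))
          (fun _ _ => zero_le) (mem_univ k)
  -- the L¹ norm of F
  set R : ℝ := ∑ i : Fin n, ∑ j : Fin n, ∫ y, |A i j y| with hR
  have hintabs : ∀ k l, ∫ y, |A k l y| = ∫ y, ‖A k l y‖ := by
    intro k l; simp [Real.norm_eq_abs]
  have hlintF : ∫⁻ y, F y = ENNReal.ofReal R := by
    rw [hF]
    rw [lintegral_finset_sum _ (f := fun k y => ∑ l : Fin n, (‖A k l y‖₊ : ENNReal))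
      (fun k _ => Finset.measurable_sum _ (fun l _ => (contA k l).measurable.enorm))]
    have : ∀ k : Fin n, ∫⁻ y, ∑ l : Fin n, (‖A k l y‖₊ : ENNReal) =
        ∑ l : Fin n, ∫⁻ y, (‖A k l y‖₊ : ENNReal) := fun k =>
      lintegral_finset_sum _ (fun l _ => (contA k l).measurable.enorm)
    simp_rw [this]
    have h2 : ∀ k l : Fin n, ∫⁻ y, (‖A k l y‖₊ : ENNReal) = ENNReal.ofReal (∫ y, |A k l y|) := by
      intro k l
      rw [hintabs k l, ofReal_integral_norm_eq_lintegral_enorm (intA k l)]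
      rfl
    simp_rw [h2, hR]
    rw [ENNReal.ofReal_sum_of_nonneg]
    · exact Finset.sum_congr rfl fun k _ => (ENNReal.ofReal_sum_of_nonneg
        (fun l _ => integral_nonneg fun y => abs_nonneg _)).symm
    · intro i _
      exact Finset.sum_nonneg fun l _ => integral_nonneg fun y => abs_nonneg _
  have hR0 : 0 ≤ R :=
    Finset.sum_nonneg fun i _ => Finset.sum_nonneg fun l _ => integral_nonneg fun y => abs_nonneg _
  -- real-abs to ENNReal comparison helper
  have habs : ∀ {a b : ℝ}, |a| ≤ b → (‖a‖₊ : ENNReal) ≤ ENNReal.ofReal b := by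
    intro a b h
    rw [Real.ennnorm_eq_ofReal_abs]
    exact ENNReal.ofReal_le_ofReal h
  -- the hypotheses of `core`
  have hsingle_ne : ∀ i : Fin n, (Pi.single i 1 : Fin n → ℝ) ≠ 0 := by
    intro i h
    have := congrFun h i
    simp at this
  have hv1 : ∀ j : Fin n, ∀ x, (‖v j x‖₊ : ENNReal) ≤
      ∫⁻ s : ℝ, F (x + s • (Pi.single j 1 : Fin n → ℝ)) := by
    intro j x
    refine (line_ftc (v j) (hv j) (hs j) _ (hsingle_ne j) x).trans (lintegral_mono fun s => ?_)
    set y := x + s • (Pi.single j 1 : Fin n → ℝ)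
    have h1 : |fderiv ℝ (v j) y (Pi.single j 1)| ≤ |A j j y| := by
      have : A j j y = fderiv ℝ (v j) y (Pi.single j 1) + fderiv ℝ (v j) y (Pi.single j 1) := rfl
      rw [this, ← two_mul, abs_mul, abs_two]
      nlinarith [abs_nonneg (fderiv ℝ (v j) y (Pi.single j 1))]
    calc (‖fderiv ℝ (v j) y (Pi.single j 1)‖₊ : ENNReal)
        ≤ (‖A j j y‖₊ : ENNReal) := by
          rw [Real.ennnorm_eq_ofReal_abs, Real.ennnorm_eq_ofReal_abs]
          exact ENNReal.ofReal_le_ofReal h1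
      _ ≤ F y := termleF j j y
  have hv2 : ∀ j i : Fin n, i ≠ j → ∀ x, (‖v j x‖₊ : ENNReal) ≤
      (∫⁻ s : ℝ, F (x + s • ((Pi.single i 1 : Fin n → ℝ) + Pi.single j 1))) +
      ∫⁻ s : ℝ, F (x + s • (Pi.single i 1 : Fin n → ℝ)) := by
    intro j i hij x
    set d : Fin n → ℝ := (Pi.single i 1 : Fin n → ℝ) + Pi.single j 1 with hd
    have hdne : d ≠ 0 := by
      intro h
      have := congrFun h i
      simp [hd, Pi.single_apply, hij] at this
    -- triangle inequality
    have htri : (‖v j x‖₊ : ENNReal) ≤ (‖v i x + v j x‖₊ : ENNReal) + ‖v i x‖₊ := by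
      rw [Real.ennnorm_eq_ofReal_abs, Real.ennnorm_eq_ofReal_abs, Real.ennnorm_eq_ofReal_abs,
        ← ENNReal.ofReal_add (abs_nonneg _) (abs_nonneg _)]
      apply ENNReal.ofReal_le_ofReal
      calc |v j x| = |(v i x + v j x) - v i x| := by ring_nf
        _ ≤ |v i x + v j x| + |v i x| := abs_sub _ _
    refine htri.trans (add_le_add ?_ ?_)
    · -- diagonal direction
      have hw : ContDiff ℝ (⊤ : ℕ∞) (fun y => v i y + v j y) := (hv i).add (hv j)
      have hws : HasCompactSupport (fun y => v i y + v j y) := (hs i).add (hs j)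
      refine (line_ftc _ hw hws d hdne x).trans (lintegral_mono fun s => ?_)
      set y := x + s • d
      have hfd : fderiv ℝ (fun y => v i y + v j y) y d =
          fderiv ℝ (v i) y d + fderiv ℝ (v j) y d := by
        rw [fderiv_fun_add ((hvd i) y) ((hvd j) y)]
        rfl
      set aii := fderiv ℝ (v i) y (Pi.single i 1)
      set aji := fderiv ℝ (v i) y (Pi.single j 1)
      set aij := fderiv ℝ (v j) y (Pi.single i 1)
      set ajj := fderiv ℝ (v j) y (Pi.single j 1)
      have hval : fderiv ℝ (fun y => v i y + v j y) y d = aii + aji + aij + ajj := by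
        rw [hfd, hd, map_add, map_add]
        ring
      have hAii : A i i y = aii + aii := rfl
      have hAij : A i j y = aij + aji := rfl
      have hAjj : A j j y = ajj + ajj := rfl
      have habs2 : |aii + aji + aij + ajj| ≤ |A i i y| + |A i j y| + |A j j y| := by
        rw [hAii, hAij, hAjj]
        have h1 := abs_add_le (aii + aii) (aij + aji)
        have h2 := abs_add_le ((aii + aii) + (aij + aji)) (ajj + ajj)
        have h3 : |(2:ℝ) * (aii + aji + aij + ajj)| = 2 * |aii + aji + aij + ajj| := by
          rw [abs_mul, abs_two]
        have h4 : (2:ℝ) * (aii + aji + aij + ajj) =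
            ((aii + aii) + (aij + aji)) + (ajj + ajj) + (aij + aji) := by ring
        have h5 := abs_add_le (((aii + aii) + (aij + aji)) + (ajj + ajj)) (aij + aji)
        rw [h4] at h3
        nlinarith [abs_nonneg (aij + aji), abs_nonneg (aii + aii), abs_nonneg (ajj + ajj)]
      calc (‖fderiv ℝ (fun y => v i y + v j y) y d‖₊ : ENNReal)
          ≤ (‖A i i y‖₊ : ENNReal) + ‖A i j y‖₊ + ‖A j j y‖₊ := by
            rw [Real.ennnorm_eq_ofReal_abs, Real.ennnorm_eq_ofReal_abs,
              Real.ennnorm_eq_ofReal_abs, Real.ennnorm_eq_ofReal_abs,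
              ← ENNReal.ofReal_add (abs_nonneg _) (abs_nonneg _),
              ← ENNReal.ofReal_add (by positivity) (abs_nonneg _)]
            exact ENNReal.ofReal_le_ofReal (by rw [hval]; exact habs2)
        _ ≤ F y := by
            have hsub : ({i, j} : Finset (Fin n)) ⊆ univ := subset_univ _
            have hIJ : (‖A i i y‖₊ : ENNReal) + ‖A i j y‖₊ ≤
                ∑ l : Fin n, (‖A i l y‖₊ : ENNReal) := by
              have : ({i, j} : Finset (Fin n)).sum (fun l => (‖A i l y‖₊ : ENNReal)) =
                  (‖A i i y‖₊ : ENNReal) + ‖A i j y‖₊ := by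
                rw [Finset.sum_insert (by simpa using hij), Finset.sum_singleton]
              rw [← this]
              exact Finset.sum_le_sum_of_subset (subset_univ _)
            have hJ : (‖A j j y‖₊ : ENNReal) ≤ ∑ l : Fin n, (‖A j l y‖₊ : ENNReal) :=
              Finset.single_le_sum (f := fun l => (‖A j l y‖₊ : ENNReal))
                (fun _ _ => zero_le) (mem_univ j)
            have hIJ2 : (∑ l : Fin n, (‖A i l y‖₊ : ENNReal)) +
                ∑ l : Fin n, (‖A j l y‖₊ : ENNReal) ≤ F y := by
              have : ({i, j} : Finset (Fin n)).sum
                  (fun k => ∑ l : Fin n, (‖A k l y‖₊ : ENNReal)) =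
                  (∑ l : Fin n, (‖A i l y‖₊ : ENNReal)) +
                    ∑ l : Fin n, (‖A j l y‖₊ : ENNReal) := by
                rw [Finset.sum_insert (by simpa using hij), Finset.sum_singleton]
              rw [hF, ← this]
              exact Finset.sum_le_sum_of_subset (subset_univ _)
            calc (‖A i i y‖₊ : ENNReal) + ‖A i j y‖₊ + ‖A j j y‖₊
                ≤ (∑ l : Fin n, (‖A i l y‖₊ : ENNReal)) +
                  ∑ l : Fin n, (‖A j l y‖₊ : ENNReal) := add_le_add hIJ hJ
              _ ≤ F y := hIJ2
    · refine (line_ftc (v i) (hv i) (hs i) _ (hsingle_ne i) x).trans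
        (lintegral_mono fun s => ?_)
      set y := x + s • (Pi.single i 1 : Fin n → ℝ)
      have h1 : |fderiv ℝ (v i) y (Pi.single i 1)| ≤ |A i i y| := by
        have : A i i y = fderiv ℝ (v i) y (Pi.single i 1) + fderiv ℝ (v i) y (Pi.single i 1) :=
          rfl
        rw [this, ← two_mul, abs_mul, abs_two]
        nlinarith [abs_nonneg (fderiv ℝ (v i) y (Pi.single i 1))]
      calc (‖fderiv ℝ (v i) y (Pi.single i 1)‖₊ : ENNReal)
          ≤ (‖A i i y‖₊ : ENNReal) := by
            rw [Real.ennnorm_eq_ofReal_abs, Real.ennnorm_eq_ofReal_abs]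
            exact ENNReal.ofReal_le_ofReal h1
        _ ≤ F y := termleF i i y
  -- apply the core lemma
  have hcore : ∀ j : Fin n, ∫⁻ x, (‖v j x‖₊ : ENNReal) ^ q ≤
      2 ^ (n - 1) * (ENNReal.ofReal R) ^ q := by
    intro j
    have := core hn j F measF (v j) (hv1 j) (fun i hij x => hv2 j i hij x)
    rwa [hlintF] at this
  -- convert Bochner integrals to lintegrals
  have hIeq : ∀ j : Fin n, ∫ y, |v j y| ^ q = (∫⁻ y, (‖v j y‖₊ : ENNReal) ^ q).toReal := by
    intro j
    rw [integral_eq_lintegral_of_nonneg_ae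
      (ae_of_all _ fun y => Real.rpow_nonneg (abs_nonneg _) q)
      ((hv j).continuous.abs.rpow_const (fun y => Or.inr hq0)).aestronglyMeasurable]
    congr 1
    apply lintegral_congr
    intro y
    rw [← ENNReal.ofReal_rpow_of_nonneg (abs_nonneg _) hq0, Real.ennnorm_eq_ofReal_abs]
  -- each summand is at most 2^(n-1) * R
  have hperj : ∀ j : Fin n, (∫ y, |v j y| ^ q) ^ (((n : ℝ) - 1) / (n : ℝ)) ≤
      2 ^ (n - 1) * R := by
    intro j
    set e : ℝ := ((n : ℝ) - 1) / (n : ℝ) with he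
    have he0 : 0 ≤ e := by positivity
    have he1 : e ≤ 1 := by
      rw [he, div_le_one hn0]; linarith
    have hfin : (2 : ENNReal) ^ (n - 1) * (ENNReal.ofReal R) ^ q ≠ ⊤ := by
      apply ENNReal.mul_ne_top
      · exact ENNReal.pow_ne_top ENNReal.ofNat_ne_top
      · exact (ENNReal.rpow_lt_top_of_nonneg hq0 ENNReal.ofReal_ne_top).ne
    have h1 : (∫ y, |v j y| ^ q) ≤ 2 ^ (n - 1) * R ^ q := by
      rw [hIeq j]
      calc (∫⁻ y, (‖v j y‖₊ : ENNReal) ^ q).toReal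
          ≤ ((2 : ENNReal) ^ (n - 1) * (ENNReal.ofReal R) ^ q).toReal :=
            ENNReal.toReal_mono hfin (hcore j)
        _ = 2 ^ (n - 1) * R ^ q := by
            rw [ENNReal.toReal_mul, ← ENNReal.toReal_rpow, ENNReal.toReal_ofReal hR0]
            simp
    calc (∫ y, |v j y| ^ q) ^ e ≤ (2 ^ (n - 1) * R ^ q) ^ e := by
          apply Real.rpow_le_rpow _ h1 he0
          rw [hIeq j]; exact ENNReal.toReal_nonneg
      _ = (2 ^ (n - 1) : ℝ) ^ e * (R ^ q) ^ e := Real.mul_rpow (by positivity)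
          (Real.rpow_nonneg hR0 q)
      _ ≤ 2 ^ (n - 1) * R := by
          have h2 : ((2:ℝ) ^ (n - 1)) ^ e ≤ ((2:ℝ) ^ (n - 1)) ^ (1:ℝ) :=
            Real.rpow_le_rpow_of_exponent_le (one_le_pow₀ (by norm_num)) he1
          rw [Real.rpow_one] at h2
          have hqe : q * e = 1 := by
            rw [hqdef, he]; field_simp
          have h3 : (R ^ q) ^ e = R := by
            rw [← Real.rpow_mul hR0, hqe, Real.rpow_one]
          rw [h3]
          exact mul_le_mul_of_nonneg_right h2 hR0
  calc ∑ j : Fin n, (∫ y, |v j y| ^ q) ^ (((n : ℝ) - 1) / (n : ℝ))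
      ≤ ∑ _j : Fin n, (2 : ℝ) ^ (n - 1) * R := Finset.sum_le_sum fun j _ => hperj j
    _ = ((n : ℝ) * 2 ^ (n - 1)) * R := by
        rw [Finset.sum_const, card_univ, Fintype.card_fin, nsmul_eq_mul]
        ring

open Finset in
/-- The endpoint Korn–Sobolev inequality of Strauss in the Euclidean case. -/
theorem stmt16 (n : ℕ) (hn : 2 ≤ n) :
    ∃ C : ℝ, ∀ u : Fin n → EuclideanSpace ℝ (Fin n) → ℝ,
      (∀ j, ContDiff ℝ (⊤ : ℕ∞) (u j)) → (∀ j, HasCompactSupport (u j)) →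
      ∑ j : Fin n, (∫ x, |u j x| ^ ((n : ℝ) / ((n : ℝ) - 1))) ^
          (((n : ℝ) - 1) / (n : ℝ)) ≤
        C * ∑ i : Fin n, ∑ j : Fin n, ∫ x,
          |fderiv ℝ (u j) x (EuclideanSpace.single i 1) +
            fderiv ℝ (u i) x (EuclideanSpace.single j 1)| := by
  refine ⟨(n : ℝ) * 2 ^ (n - 1), fun u hu hc => ?_⟩
  set e := EuclideanSpace.equiv (Fin n) ℝ with he
  set v : Fin n → (Fin n → ℝ) → ℝ := fun j y => u j (e.symm y) with hvdef
  have hv : ∀ j, ContDiff ℝ (⊤ : ℕ∞) (v j) := fun j => (hu j).comp e.symm.contDiff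
  have hsv : ∀ j, HasCompactSupport (v j) := fun j =>
    (hc j).comp_homeomorph e.symm.toHomeomorph
  -- derivative identification
  have hfd : ∀ (j i : Fin n) (y : Fin n → ℝ),
      fderiv ℝ (v j) y (Pi.single i 1) =
        fderiv ℝ (u j) (e.symm y) (EuclideanSpace.single i 1) := by
    intro j i y
    have h1 : v j = (u j) ∘ e.symm := rfl
    rw [h1, fderiv_comp y ((hu j).differentiable (by simp) _)
      e.symm.differentiableAt, e.symm.fderiv]
    rfl
  -- measure transfer
  have hmp : MeasurePreserving (MeasurableEquiv.toLp 2 (Fin n → ℝ))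
      (volume : Measure (Fin n → ℝ)) volume :=
    (EuclideanSpace.volume_preserving_symm_measurableEquiv_toLp (Fin n)).symm _
  have hint : ∀ g : EuclideanSpace ℝ (Fin n) → ℝ,
      ∫ y : Fin n → ℝ, g (e.symm y) = ∫ x, g x := by
    intro g
    have h2 : ∀ y, e.symm y = (MeasurableEquiv.toLp 2 (Fin n → ℝ)) y := fun y => rfl
    simp_rw [h2]
    exact hmp.integral_comp (MeasurableEquiv.toLp 2 (Fin n → ℝ)).measurableEmbedding g
  have key := korn_pi hn v hv hsv
  have hL : ∀ j : Fin n, ∫ y, |v j y| ^ ((n : ℝ) / ((n : ℝ) - 1)) =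
      ∫ x, |u j x| ^ ((n : ℝ) / ((n : ℝ) - 1)) := fun j =>
    hint fun x => |u j x| ^ ((n : ℝ) / ((n : ℝ) - 1))
  have hRt : ∀ i j : Fin n, (∫ y, |fderiv ℝ (v j) y (Pi.single i 1) +
      fderiv ℝ (v i) y (Pi.single j 1)|) = ∫ x, |fderiv ℝ (u j) x (EuclideanSpace.single i 1) +
        fderiv ℝ (u i) x (EuclideanSpace.single j 1)| := by
    intro i j
    have := hint fun x => |fderiv ℝ (u j) x (EuclideanSpace.single i 1) +
      fderiv ℝ (u i) x (EuclideanSpace.single j 1)|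
    rw [← this]
    apply integral_congr_ae
    filter_upwards with y
    rw [hfd j i y, hfd i j y]
  simp_rw [hL, hRt] at key
  exact key
end

section
/- Let n ≥ 2 be an integer and let p be a real number with 1 ≤ p < n/(n−1). There is a constant C = C(n, p) such that for every smooth compactly supported function u : ℝⁿ → ℝ, (∫_{ℝⁿ} (|x|^{n−1} |u(x)|)^p |x|^{−n} dx)^{1/p} ≤ C ∑_{j=1}^{n} ‖∂_j u‖_{L¹(ℝⁿ)}. In particular (taking p = 1), ∫_{ℝⁿ} |u(x)|/|x| dx ≤ C ∑_{j=1}^{n} ‖∂_j u‖_{L¹(ℝⁿ)}. -/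
open MeasureTheory Set ENNReal NNReal Module

section HardyAux

variable {n : ℕ}

private lemma hardy_lint_comp_smul (f : EuclideanSpace ℝ (Fin n) → ℝ≥0∞) (hf : Measurable f)
    {s : ℝ} (hs : s ≠ 0) :
    ∫⁻ x, f (s • x) = ENNReal.ofReal |(s ^ n)⁻¹| * ∫⁻ x, f x := by
  rw [← lintegral_map hf (measurable_const_smul s),
    Measure.map_addHaar_smul volume hs, lintegral_smul_measure]
  congr 2
  simp [finrank_euclideanSpace]

private lemma hardy_pointwise (u : EuclideanSpace ℝ (Fin n) → ℝ) (hu : ContDiff ℝ 1 u)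
    (h2u : HasCompactSupport u) (x : EuclideanSpace ℝ (Fin n)) (hx : x ≠ 0) :
    (‖u x‖₊ : ℝ≥0∞) ≤ (∫⁻ s in Ioi (1:ℝ), ‖fderiv ℝ u (s • x)‖₊) * ‖x‖₊ := by
  obtain ⟨R, hR⟩ := h2u.isCompact.isBounded.subset_closedBall 0
  have hxn : (0:ℝ) < ‖x‖ := norm_pos_iff.2 hx
  set T : ℝ := |R| / ‖x‖ + 1 with hT
  have hT1 : (1:ℝ) ≤ T := le_add_of_nonneg_left (by positivity)
  have hgT : u (T • x) = 0 := by
    apply image_eq_zero_of_notMem_tsupport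
    intro hmem
    have h1 : ‖T • x‖ ≤ R := by
      have := hR hmem
      simpa using this
    have h2 : ‖T • x‖ = T * ‖x‖ := by
      rw [norm_smul, Real.norm_eq_abs, abs_of_pos (by positivity)]
    rw [h2, hT, add_mul, div_mul_cancel₀ _ hxn.ne', one_mul] at h1
    nlinarith [abs_nonneg R, le_abs_self R]
  have hderiv : ∀ s : ℝ, HasDerivAt (fun t => u (t • x)) (fderiv ℝ u (s • x) x) s := by
    intro s
    have h1 : HasFDerivAt u (fderiv ℝ u (s • x)) (s • x) :=
      (hu.differentiable one_ne_zero (s • x)).hasFDerivAt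
    simpa [Function.comp_def] using h1.comp_hasDerivAt s ((hasDerivAt_id s).smul_const x)
  have hcont : Continuous fun s : ℝ => fderiv ℝ u (s • x) x :=
    ((hu.continuous_fderiv one_ne_zero).comp (continuous_id.smul continuous_const)).clm_apply
      continuous_const
  have hftc : u (T • x) - u ((1:ℝ) • x) = ∫ s in (1:ℝ)..T, fderiv ℝ u (s • x) x :=
    (intervalIntegral.integral_eq_sub_of_hasDerivAt (fun s _ => hderiv s)
      (hcont.intervalIntegrable 1 T)).symm
  have hux : ‖u x‖ ≤ ∫ s in Ioc (1:ℝ) T, ‖fderiv ℝ u (s • x) x‖ := by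
    have : u x = -(u (T • x) - u ((1:ℝ) • x)) := by simp [hgT]
    rw [this, norm_neg, hftc]
    calc ‖∫ s in (1:ℝ)..T, fderiv ℝ u (s • x) x‖
        ≤ ∫ s in (1:ℝ)..T, ‖fderiv ℝ u (s • x) x‖ :=
          intervalIntegral.norm_integral_le_integral_norm hT1
      _ = ∫ s in Ioc (1:ℝ) T, ‖fderiv ℝ u (s • x) x‖ :=
          intervalIntegral.integral_of_le hT1
  calc (‖u x‖₊ : ℝ≥0∞) = ENNReal.ofReal ‖u x‖ := (ofReal_norm _).symm
    _ ≤ ENNReal.ofReal (∫ s in Ioc (1:ℝ) T, ‖fderiv ℝ u (s • x) x‖) :=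
        ENNReal.ofReal_le_ofReal hux
    _ = ∫⁻ s in Ioc (1:ℝ) T, ENNReal.ofReal ‖fderiv ℝ u (s • x) x‖ :=
        ofReal_integral_eq_lintegral_ofReal
          (hcont.norm.integrableOn_Ioc) (Filter.Eventually.of_forall fun s => norm_nonneg _)
    _ ≤ ∫⁻ s in Ioi (1:ℝ), ENNReal.ofReal ‖fderiv ℝ u (s • x) x‖ :=
        lintegral_mono_set Ioc_subset_Ioi_self
    _ ≤ ∫⁻ s in Ioi (1:ℝ), ‖fderiv ℝ u (s • x)‖₊ * ‖x‖₊ := by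
        refine lintegral_mono fun s => ?_
        rw [ofReal_norm, enorm_eq_nnnorm]
        simpa [ENNReal.coe_mul] using ENNReal.coe_le_coe.2 ((fderiv ℝ u (s • x)).le_opNNNorm x)
    _ = (∫⁻ s in Ioi (1:ℝ), ‖fderiv ℝ u (s • x)‖₊) * ‖x‖₊ :=
        lintegral_mul_const' _ _ coe_ne_top

private lemma hardy_ioi_integral (hn : 2 ≤ n) :
    ∫⁻ s in Ioi (1:ℝ), ENNReal.ofReal ((s ^ n)⁻¹) = ENNReal.ofReal (1 / ((n:ℝ) - 1)) := by
  have h2 : (2:ℝ) ≤ (n:ℝ) := by exact_mod_cast hn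
  have hlt : -(n:ℝ) < -1 := by linarith
  calc ∫⁻ s in Ioi (1:ℝ), ENNReal.ofReal ((s ^ n)⁻¹)
      = ∫⁻ s in Ioi (1:ℝ), ENNReal.ofReal (s ^ (-(n:ℝ))) := by
        refine setLIntegral_congr_fun measurableSet_Ioi ?_
        intro s hs
        have hs0 : (0:ℝ) < s := lt_trans zero_lt_one hs
        dsimp only
        rw [Real.rpow_neg hs0.le, Real.rpow_natCast]
    _ = ENNReal.ofReal (∫ s in Ioi (1:ℝ), s ^ (-(n:ℝ))) :=
        (ofReal_integral_eq_lintegral_ofReal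
          (integrableOn_Ioi_rpow_of_lt hlt zero_lt_one)
          (ae_restrict_of_forall_mem measurableSet_Ioi fun s hs =>
            Real.rpow_nonneg (lt_trans zero_lt_one hs).le _)).symm
    _ = ENNReal.ofReal (1 / ((n:ℝ) - 1)) := by
        rw [integral_Ioi_rpow_of_lt hlt zero_lt_one, Real.one_rpow]
        congr 1
        rw [neg_div, neg_eq_iff_eq_neg, one_div, one_div, ← inv_neg]
        congr 1
        ring

private lemma hardy_one (hn : 2 ≤ n) (u : EuclideanSpace ℝ (Fin n) → ℝ) (hu : ContDiff ℝ 1 u)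
    (h2u : HasCompactSupport u) :
    ∫⁻ x, (‖u x‖₊ : ℝ≥0∞) * ((‖x‖₊ : ℝ≥0∞))⁻¹ ≤
      ENNReal.ofReal (1 / ((n:ℝ) - 1)) * ∫⁻ x, ‖fderiv ℝ u x‖₊ := by
  have hcf : Continuous (fderiv ℝ u) := hu.continuous_fderiv one_ne_zero
  have hmf : Measurable fun y => (‖fderiv ℝ u y‖₊ : ℝ≥0∞) :=
    hcf.nnnorm.measurable.coe_nnreal_ennreal
  haveI : Nontrivial (EuclideanSpace ℝ (Fin n)) := by
    apply nontrivial_of_finrank_pos (R := ℝ)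
    rw [finrank_euclideanSpace_fin]
    omega
  have h0 : ∀ᵐ x : EuclideanSpace ℝ (Fin n) ∂volume, x ≠ 0 := by
    have hz : (volume ({(0 : EuclideanSpace ℝ (Fin n))} : Set _)) = 0 := measure_singleton _
    rw [ae_iff]
    convert hz using 2
    ext x; simp
  calc ∫⁻ x, (‖u x‖₊ : ℝ≥0∞) * ((‖x‖₊ : ℝ≥0∞))⁻¹
      ≤ ∫⁻ x, ∫⁻ s in Ioi (1:ℝ), ‖fderiv ℝ u (s • x)‖₊ := by
        refine lintegral_mono_ae ?_
        filter_upwards [h0] with x hx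
        have hxn : (‖x‖₊ : ℝ≥0∞) ≠ 0 := by
          simpa using norm_pos_iff.2 hx |>.ne'
        calc (‖u x‖₊ : ℝ≥0∞) * ((‖x‖₊ : ℝ≥0∞))⁻¹
            ≤ ((∫⁻ s in Ioi (1:ℝ), ‖fderiv ℝ u (s • x)‖₊) * ‖x‖₊) * ((‖x‖₊ : ℝ≥0∞))⁻¹ := by
              gcongr
              exact hardy_pointwise u hu h2u x hx
          _ = (∫⁻ s in Ioi (1:ℝ), ‖fderiv ℝ u (s • x)‖₊) * ((‖x‖₊ : ℝ≥0∞) * ((‖x‖₊ : ℝ≥0∞))⁻¹) :=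
              mul_assoc _ _ _
          _ = ∫⁻ s in Ioi (1:ℝ), ‖fderiv ℝ u (s • x)‖₊ := by
              rw [ENNReal.mul_inv_cancel hxn coe_ne_top, mul_one]
    _ = ∫⁻ s in Ioi (1:ℝ), ∫⁻ x, (‖fderiv ℝ u (s • x)‖₊ : ℝ≥0∞) := by
        rw [lintegral_lintegral_swap]
        apply Measurable.aemeasurable
        exact (hcf.nnnorm.comp ((continuous_snd.smul continuous_fst))).measurable.coe_nnreal_ennreal
    _ = ∫⁻ s in Ioi (1:ℝ), ENNReal.ofReal ((s ^ n)⁻¹) * ∫⁻ x, (‖fderiv ℝ u x‖₊ : ℝ≥0∞) := by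
        refine setLIntegral_congr_fun measurableSet_Ioi ?_
        intro s hs
        have hs0 : (0:ℝ) < s := lt_trans zero_lt_one hs
        dsimp only
        rw [hardy_lint_comp_smul _ hmf hs0.ne']
        rw [abs_of_nonneg (by positivity)]
    _ = (∫⁻ s in Ioi (1:ℝ), ENNReal.ofReal ((s ^ n)⁻¹)) * ∫⁻ x, (‖fderiv ℝ u x‖₊ : ℝ≥0∞) :=
        lintegral_mul_const'' _
          ((ENNReal.measurable_ofReal.comp ((measurable_id.pow_const n).inv)).aemeasurable)
    _ = ENNReal.ofReal (1 / ((n:ℝ) - 1)) * ∫⁻ x, ‖fderiv ℝ u x‖₊ := by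
        rw [hardy_ioi_integral hn]

private lemma hardy_opnorm (L : EuclideanSpace ℝ (Fin n) →L[ℝ] ℝ) :
    ‖L‖ ≤ ∑ j : Fin n, |L (EuclideanSpace.single j 1)| := by
  refine L.opNorm_le_bound (Finset.sum_nonneg fun j _ => abs_nonneg _) fun y => ?_
  have hy : y = ∑ j : Fin n, y j • EuclideanSpace.single j 1 := by
    conv_lhs => rw [← (EuclideanSpace.basisFun (Fin n) ℝ).sum_repr y]
    refine Finset.sum_congr rfl fun j _ => ?_
    rw [EuclideanSpace.basisFun_apply]
    rfl
  have hLy : L y = ∑ j : Fin n, y j * L (EuclideanSpace.single j 1) := by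
    conv_lhs => rw [hy]
    rw [map_sum]
    refine Finset.sum_congr rfl fun j _ => ?_
    rw [ContinuousLinearMap.map_smul, smul_eq_mul]
  rw [Real.norm_eq_abs, hLy]
  calc |∑ j : Fin n, y j * L (EuclideanSpace.single j 1)|
      ≤ ∑ j : Fin n, |y j * L (EuclideanSpace.single j 1)| := Finset.abs_sum_le_sum_abs _ _
    _ ≤ ∑ j : Fin n, ‖y‖ * |L (EuclideanSpace.single j 1)| := by
        refine Finset.sum_le_sum fun j _ => ?_
        rw [abs_mul]
        refine mul_le_mul_of_nonneg_right ?_ (abs_nonneg _)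
        calc |y j| = Real.sqrt (|y j| ^ 2) := (Real.sqrt_sq (abs_nonneg _)).symm
          _ ≤ Real.sqrt (∑ i : Fin n, |y i| ^ 2) :=
              Real.sqrt_le_sqrt
                (Finset.single_le_sum (f := fun i : Fin n => |y i| ^ 2)
                  (fun i _ => sq_nonneg _) (Finset.mem_univ j))
          _ = ‖y‖ := by
              rw [EuclideanSpace.norm_eq]
              simp [Real.norm_eq_abs]
    _ = (∑ j : Fin n, |L (EuclideanSpace.single j 1)|) * ‖y‖ := by
        rw [← Finset.mul_sum, mul_comm]

end HardyAux

/-- The endpoint Hardy-type inequality for the gradient in the Euclidean case. -/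
theorem stmt18 (n : ℕ) (hn : 2 ≤ n) (p : ℝ) (hp1 : 1 ≤ p)
    (hp2 : p < (n : ℝ) / ((n : ℝ) - 1)) :
    ∃ C : ℝ, ∀ u : EuclideanSpace ℝ (Fin n) → ℝ,
      ContDiff ℝ (⊤ : ℕ∞) u → HasCompactSupport u →
      (∫ x, (‖x‖ ^ (n - 1) * |u x|) ^ p * ‖x‖ ^ (-(n : ℝ))) ^ (1 / p) ≤
        C * ∑ j : Fin n, ∫ x, |fderiv ℝ u x (EuclideanSpace.single j 1)| := by
  have h2 : (2:ℝ) ≤ (n:ℝ) := by exact_mod_cast hn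
  have hn1 : (0:ℝ) < (n:ℝ) - 1 := by linarith
  set q : ℝ := (n:ℝ) / ((n:ℝ) - 1) with hqdef
  have hq1 : 1 < q := (one_lt_div hn1).2 (by linarith)
  have hp0 : (0:ℝ) < p := lt_of_lt_of_le zero_lt_one hp1
  set α : ℝ := (n:ℝ) - ((n:ℝ) - 1) * p with hα
  have hα0 : 0 < α := by
    have h := (lt_div_iff₀ hn1).1 hp2
    simp only [hα]
    nlinarith
  have hα1 : α ≤ 1 := by
    simp only [hα]
    nlinarith [mul_nonneg hn1.le (sub_nonneg.2 hp1)]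
  have h1α : 1 - α = ((n:ℝ) - 1) * (p - 1) := by rw [hα]; ring
  have h1α0 : 0 ≤ 1 - α := by linarith
  have hq1α : q * (1 - α) = (n:ℝ) * (p - 1) := by
    rw [h1α, hqdef]
    field_simp
  have hidB : α + q * (1 - α) = p := by rw [hq1α, hα]; ring
  have hcast : ((n - 1 : ℕ) : ℝ) = (n:ℝ) - 1 := by
    have h1 : 1 ≤ n := by omega
    rw [Nat.cast_sub h1]
    norm_num
  have hidA : ((n - 1 : ℕ) : ℝ) * p + (-(n:ℝ)) = -α := by rw [hcast, hα]; ring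
  -- constants
  set K2 : ℝ≥0 := lintegralPowLePowLIntegralFDerivConst
    (volume : Measure (EuclideanSpace ℝ (Fin n))) q with hK2
  set K : ℝ≥0∞ := ENNReal.ofReal (1 / ((n:ℝ) - 1)) ^ α * (K2 : ℝ≥0∞) ^ (1 - α) with hK
  have hKtop : K ≠ ⊤ := by
    rw [hK]
    exact mul_ne_top (ENNReal.rpow_ne_top_of_nonneg hα0.le ofReal_ne_top)
      (ENNReal.rpow_ne_top_of_nonneg h1α0 coe_ne_top)
  refine ⟨K.toReal ^ (1 / p), ?_⟩
  intro u hu' h2u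
  have hu : ContDiff ℝ 1 u := hu'.of_le (by exact_mod_cast (le_top : (1:ℕ∞) ≤ ⊤))
  have hcu : Continuous u := hu.continuous
  have hcf : Continuous (fderiv ℝ u) := hu.continuous_fderiv one_ne_zero
  set A : EuclideanSpace ℝ (Fin n) → ℝ≥0∞ := fun x => (‖u x‖₊ : ℝ≥0∞) with hA
  set B : EuclideanSpace ℝ (Fin n) → ℝ≥0∞ := fun x => (‖x‖₊ : ℝ≥0∞) with hB
  set D : ℝ≥0∞ := ∫⁻ x, ‖fderiv ℝ u x‖₊ with hD
  have hfdInt : Integrable (fderiv ℝ u) volume :=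
    hcf.integrable_of_hasCompactSupport (h2u.fderiv (𝕜 := ℝ))
  have hDtop : D ≠ ⊤ := hfdInt.hasFiniteIntegral.ne
  have hAmeas : Measurable A := hcu.nnnorm.measurable.coe_nnreal_ennreal
  have hBmeas : Measurable B := continuous_nnnorm.measurable.coe_nnreal_ennreal
  -- conjugate exponent fact for Sobolev
  have hconj : Real.HolderConjugate (finrank ℝ (EuclideanSpace ℝ (Fin n))) q := by
    rw [finrank_euclideanSpace_fin]
    constructor
    · rw [hqdef, inv_div, inv_one]
      field_simp
      ring
    · linarith
    · linarith
  have hsob : ∫⁻ x, A x ^ q ≤ (K2 : ℝ≥0∞) * D ^ q := by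
    have := lintegral_pow_le_pow_lintegral_fderiv
      (volume : Measure (EuclideanSpace ℝ (Fin n))) hu h2u hconj
    simpa [hA, hK2, hD, enorm_eq_nnnorm] using this
  have hhardy : ∫⁻ x, A x * (B x)⁻¹ ≤ ENNReal.ofReal (1 / ((n:ℝ) - 1)) * D :=
    hardy_one hn u hu h2u
  -- a.e. nonvanishing
  haveI : Nontrivial (EuclideanSpace ℝ (Fin n)) := by
    apply nontrivial_of_finrank_pos (R := ℝ)
    rw [finrank_euclideanSpace_fin]; omega
  have h0 : ∀ᵐ x : EuclideanSpace ℝ (Fin n) ∂volume, x ≠ 0 := by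
    have hz : (volume ({(0 : EuclideanSpace ℝ (Fin n))} : Set _)) = 0 := measure_singleton _
    rw [ae_iff]
    convert hz using 2
    ext x; simp
  -- pointwise identity
  set G : EuclideanSpace ℝ (Fin n) → ℝ := fun x => (‖x‖ ^ (n - 1) * |u x|) ^ p * ‖x‖ ^ (-(n:ℝ))
    with hG
  have hGnn : ∀ x, 0 ≤ G x := fun x =>
    mul_nonneg (Real.rpow_nonneg (mul_nonneg (pow_nonneg (norm_nonneg _) _) (abs_nonneg _)) _)
      (Real.rpow_nonneg (norm_nonneg _) _)
  have hpt : ∀ x : EuclideanSpace ℝ (Fin n), x ≠ 0 →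
      ENNReal.ofReal (G x) = (A x * (B x)⁻¹) ^ α * (A x ^ q) ^ (1 - α) := by
    intro x hx
    have hxn : (0:ℝ) < ‖x‖ := norm_pos_iff.2 hx
    have hB0 : B x ≠ 0 := by simpa [hB] using hxn.ne'
    have hBtop : B x ≠ ⊤ := coe_ne_top
    have habs : |u x| = ‖u x‖ := (Real.norm_eq_abs _).symm
    have hGx : G x = ‖u x‖ ^ p * ‖x‖ ^ (((n - 1 : ℕ) : ℝ) * p + (-(n:ℝ))) := by
      rw [hG]
      simp only
      rw [habs, Real.mul_rpow (pow_nonneg (norm_nonneg _) _) (norm_nonneg _),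
        ← Real.rpow_natCast ‖x‖ (n-1), ← Real.rpow_mul (norm_nonneg x),
        Real.rpow_add hxn]
      ring
    have hofA : ENNReal.ofReal (‖u x‖ ^ p) = A x ^ p := by
      rw [← ENNReal.ofReal_rpow_of_nonneg (norm_nonneg _) hp0.le, ofReal_norm, enorm_eq_nnnorm]
    have hofB : ENNReal.ofReal (‖x‖ ^ (((n - 1 : ℕ) : ℝ) * p + (-(n:ℝ)))) =
        B x ^ (((n - 1 : ℕ) : ℝ) * p + (-(n:ℝ))) := by
      rw [← ENNReal.ofReal_rpow_of_pos hxn, ofReal_norm, enorm_eq_nnnorm]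
    rw [hGx, ENNReal.ofReal_mul (Real.rpow_nonneg (norm_nonneg _) _), hofA, hofB, hidA]
    rw [ENNReal.mul_rpow_of_nonneg _ _ hα0.le, ← ENNReal.rpow_mul (A x) q (1 - α),
      ENNReal.inv_rpow, ← ENNReal.rpow_neg]
    rw [mul_right_comm, ← ENNReal.rpow_add_of_nonneg (x := A x) α (q * (1 - α)) hα0.le
      (mul_nonneg (by positivity) h1α0), hidB]
  -- main lintegral bound
  have hmain : ∫⁻ x, ENNReal.ofReal (G x) ≤ K * D ^ p := by
    have hcongr : ∫⁻ x, ENNReal.ofReal (G x) =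
        ∫⁻ x, (A x * (B x)⁻¹) ^ α * (A x ^ q) ^ (1 - α) := by
      refine lintegral_congr_ae ?_
      filter_upwards [h0] with x hx
      exact hpt x hx
    rw [hcongr]
    have hF1meas : Measurable fun x => A x * (B x)⁻¹ := hAmeas.mul hBmeas.inv
    rcases eq_or_lt_of_le hα1 with hαeq | hαlt
    · -- α = 1 : p = 1 essentially
      have h1α' : 1 - α = 0 := by rw [hαeq]; ring
      have hpeq : p = 1 := by
        have := hidB
        rw [h1α', mul_zero, add_zero] at this
        rw [← this, hαeq]
      calc ∫⁻ x, (A x * (B x)⁻¹) ^ α * (A x ^ q) ^ (1 - α)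
          = ∫⁻ x, A x * (B x)⁻¹ := by
            refine lintegral_congr fun x => ?_
            rw [h1α', ENNReal.rpow_zero, mul_one, hαeq, ENNReal.rpow_one]
        _ ≤ ENNReal.ofReal (1 / ((n:ℝ) - 1)) * D := hhardy
        _ ≤ K * D ^ p := by
            rw [hK, h1α', ENNReal.rpow_zero, mul_one, hαeq, ENNReal.rpow_one, hpeq,
              ENNReal.rpow_one]
    · -- α < 1 : use Hölder
      have h1α0' : 0 < 1 - α := by linarith
      have hconj2 : Real.HolderConjugate (1 / α) (1 / (1 - α)) :=
        Real.holderConjugate_one_div hα0 h1α0' (by ring)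
      have hfmeas : AEMeasurable (fun x => (A x * (B x)⁻¹) ^ α) volume :=
        (hF1meas.pow_const α).aemeasurable
      have hgmeas : AEMeasurable (fun x => (A x ^ q) ^ (1 - α)) volume :=
        ((hAmeas.pow_const q).pow_const (1 - α)).aemeasurable
      calc ∫⁻ x, (A x * (B x)⁻¹) ^ α * (A x ^ q) ^ (1 - α)
          ≤ (∫⁻ x, ((A x * (B x)⁻¹) ^ α) ^ (1/α)) ^ (1 / (1/α)) *
            (∫⁻ x, ((A x ^ q) ^ (1 - α)) ^ (1/(1-α))) ^ (1 / (1/(1-α))) :=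
            ENNReal.lintegral_mul_le_Lp_mul_Lq volume hconj2 hfmeas hgmeas
        _ = (∫⁻ x, A x * (B x)⁻¹) ^ α * (∫⁻ x, A x ^ q) ^ (1 - α) := by
            rw [one_div_one_div, one_div_one_div]
            congr 1
            · congr 1
              refine lintegral_congr fun x => ?_
              rw [← ENNReal.rpow_mul, mul_one_div_cancel hα0.ne', ENNReal.rpow_one]
            · congr 1
              refine lintegral_congr fun x => ?_
              rw [← ENNReal.rpow_mul, mul_one_div_cancel h1α0'.ne', ENNReal.rpow_one]
        _ ≤ (ENNReal.ofReal (1 / ((n:ℝ) - 1)) * D) ^ α * ((K2 : ℝ≥0∞) * D ^ q) ^ (1 - α) := by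
            gcongr
        _ = K * D ^ p := by
            rw [ENNReal.mul_rpow_of_nonneg _ _ hα0.le,
              ENNReal.mul_rpow_of_nonneg _ _ h1α0, hK]
            rw [← ENNReal.rpow_mul D q (1 - α)]
            calc ENNReal.ofReal (1 / ((n:ℝ) - 1)) ^ α * D ^ α *
                  ((K2 : ℝ≥0∞) ^ (1 - α) * D ^ (q * (1 - α)))
                = ENNReal.ofReal (1 / ((n:ℝ) - 1)) ^ α * (K2 : ℝ≥0∞) ^ (1 - α) *
                  (D ^ α * D ^ (q * (1 - α))) := by ring
              _ = ENNReal.ofReal (1 / ((n:ℝ) - 1)) ^ α * (K2 : ℝ≥0∞) ^ (1 - α) * D ^ p := by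
                  rw [← ENNReal.rpow_add_of_nonneg (x := D) α (q * (1 - α)) hα0.le
                    (mul_nonneg (by positivity) h1α0), hidB]
  -- convert to real integrals
  have hGmeas : Measurable G := by
    apply Measurable.mul
    · exact (((continuous_norm.pow (n-1)).mul hcu.abs).measurable).pow_const _
    · exact continuous_norm.measurable.pow_const _
  have hGint : ∫ x, G x = (∫⁻ x, ENNReal.ofReal (G x)).toReal := by
    rw [integral_eq_lintegral_of_nonneg_ae (Filter.Eventually.of_forall hGnn)
      hGmeas.aestronglyMeasurable]
  have hKD : (∫⁻ x, ENNReal.ofReal (G x)).toReal ≤ K.toReal * D.toReal ^ p := by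
    have hne : K * D ^ p ≠ ⊤ :=
      ENNReal.mul_ne_top hKtop (ENNReal.rpow_ne_top_of_nonneg hp0.le hDtop)
    have := ENNReal.toReal_mono hne hmain
    rwa [ENNReal.toReal_mul, ← ENNReal.toReal_rpow] at this
  have hLHS : (∫ x, G x) ^ (1/p) ≤ K.toReal ^ (1/p) * D.toReal := by
    rw [hGint]
    calc (∫⁻ x, ENNReal.ofReal (G x)).toReal ^ (1/p)
        ≤ (K.toReal * D.toReal ^ p) ^ (1/p) :=
          Real.rpow_le_rpow ENNReal.toReal_nonneg hKD (by positivity)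
      _ = K.toReal ^ (1/p) * D.toReal := by
          rw [Real.mul_rpow ENNReal.toReal_nonneg (Real.rpow_nonneg ENNReal.toReal_nonneg _),
            ← Real.rpow_mul ENNReal.toReal_nonneg, mul_one_div_cancel hp0.ne',
            Real.rpow_one]
  -- final step: D.toReal ≤ sum of partial derivative integrals
  have hDreal : D.toReal = ∫ x, ‖fderiv ℝ u x‖ := by
    have hoi := ofReal_integral_norm_eq_lintegral_enorm hfdInt
    simp only [enorm_eq_nnnorm] at hoi
    rw [hD, ← hoi, ENNReal.toReal_ofReal
      (integral_nonneg fun x => norm_nonneg _)]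
  have hjint : ∀ j : Fin n, Integrable (fun x => fderiv ℝ u x (EuclideanSpace.single j 1))
      volume := by
    intro j
    apply Continuous.integrable_of_hasCompactSupport
    · exact hcf.clm_apply continuous_const
    · exact (h2u.fderiv (𝕜 := ℝ)).comp_left
        (g := fun (L : EuclideanSpace ℝ (Fin n) →L[ℝ] ℝ) => L (EuclideanSpace.single j 1)) rfl
  have hsum : ∫ x, ‖fderiv ℝ u x‖ ≤
      ∑ j : Fin n, ∫ x, |fderiv ℝ u x (EuclideanSpace.single j 1)| := by
    rw [← integral_finset_sum _ (fun j _ => (hjint j).abs)]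
    apply integral_mono hfdInt.norm (integrable_finset_sum _ fun j _ => (hjint j).abs)
    intro x
    exact hardy_opnorm (fderiv ℝ u x)
  calc (∫ x, G x) ^ (1/p) ≤ K.toReal ^ (1/p) * D.toReal := hLHS
    _ ≤ K.toReal ^ (1/p) * ∑ j : Fin n, ∫ x, |fderiv ℝ u x (EuclideanSpace.single j 1)| :=
        mul_le_mul_of_nonneg_left (by rw [hDreal]; exact hsum)
          (Real.rpow_nonneg ENNReal.toReal_nonneg _)
end
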